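/- Let q be a primitive l-th root of unity with l odd. In A(SL_q(2)), with δ = d^l central, one has for 0 ≤ k ≤ l: b^r c^s d^{l-k} = q^{(l-k)(r+s)} δ · a^k b^r c^s − Σ_{j=1}^{k} p_{k,j}(q) b^{r+j} c^{s+j} d^{l-k}. -/

import Mathlib

noncomputable section
open scoped TensorProduct

/-- The free `ℂ`-algebra on four generators `a, b, c, d`. -/
abbrev FreeSL : Type := FreeAlgebra ℂ (Fin 4)

def Fa : FreeSL := FreeAlgebra.ι ℂ 0
def Fb : FreeSL := FreeAlgebra.ι ℂ 1
def Fc : FreeSL := FreeAlgebra.ι ℂ 2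
def Fd : FreeSL := FreeAlgebra.ι ℂ 3

/-- The defining relations of `A(SL_q(2))`. -/
inductive SLqRel (q : ℂ) : FreeSL → FreeSL → Prop
  | ab : SLqRel q (Fa * Fb) (q • (Fb * Fa))
  | ac : SLqRel q (Fa * Fc) (q • (Fc * Fa))
  | bd : SLqRel q (Fb * Fd) (q • (Fd * Fb))
  | bc : SLqRel q (Fb * Fc) (Fc * Fb)
  | cd : SLqRel q (Fc * Fd) (q • (Fd * Fc))
  | ad : SLqRel q (Fa * Fd - Fd * Fa) ((q - q⁻¹) • (Fb * Fc))
  | det : SLqRel q (Fa * Fd - q • (Fb * Fc)) 1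

/-- The quantum coordinate algebra `A(SL_q(2))`. -/
abbrev ASLq (q : ℂ) : Type := RingQuot (SLqRel q)

def aq (q : ℂ) : ASLq q := RingQuot.mkAlgHom ℂ (SLqRel q) Fa
def bq (q : ℂ) : ASLq q := RingQuot.mkAlgHom ℂ (SLqRel q) Fb
def cq (q : ℂ) : ASLq q := RingQuot.mkAlgHom ℂ (SLqRel q) Fc
def dq (q : ℂ) : ASLq q := RingQuot.mkAlgHom ℂ (SLqRel q) Fd

/-- The coefficients `p_{k,j}(q)`. -/
def pcoef (q : ℂ) (k j : ℕ) : ℂ :=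
  q ^ (j ^ 2) * (∏ r ∈ Finset.Icc (j + 1) k, (q ^ (2 * r) - 1)) /
    (∏ s ∈ Finset.Icc 1 (k - j), (q ^ (2 * s) - 1))


namespace SLqAux

section generic
variable {A' : Type*} [Ring A'] [Algebra ℂ A']

lemma pow_comm_smul (t : ℂ) (x y : A') (h : x * y = t • (y * x)) (n : ℕ) :
    x * y ^ n = t ^ n • (y ^ n * x) := by
  induction n with
  | zero => simp
  | succ n ih =>
    rw [pow_succ', ← mul_assoc, h, smul_mul_assoc, mul_assoc, ih,
      mul_smul_comm, smul_smul, pow_succ', ← mul_assoc, ← pow_succ']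

lemma pow_pow_comm_smul (t : ℂ) (x y : A') (h : x * y = t • (y * x)) (m n : ℕ) :
    x ^ m * y ^ n = t ^ (m * n) • (y ^ n * x ^ m) := by
  induction m with
  | zero => simp
  | succ m ih =>
    rw [pow_succ, mul_assoc, pow_comm_smul t x y h n, mul_smul_comm, ← mul_assoc, ih,
      smul_mul_assoc, smul_smul, mul_assoc, ← pow_succ]
    congr 1
    rw [← pow_add]
    ring_nf

end generic

variable (q : ℂ)

lemma hab : aq q * bq q = q • (bq q * aq q) := by
  have h := RingQuot.mkAlgHom_rel ℂ (SLqRel.ab (q := q))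
  simpa [aq, bq, map_mul] using h

lemma hac : aq q * cq q = q • (cq q * aq q) := by
  have h := RingQuot.mkAlgHom_rel ℂ (SLqRel.ac (q := q))
  simpa [aq, cq, map_mul] using h

lemma hbd : bq q * dq q = q • (dq q * bq q) := by
  have h := RingQuot.mkAlgHom_rel ℂ (SLqRel.bd (q := q))
  simpa [bq, dq, map_mul] using h

lemma hbc : bq q * cq q = cq q * bq q := by
  have h := RingQuot.mkAlgHom_rel ℂ (SLqRel.bc (q := q))
  simpa [bq, cq, map_mul] using h

lemma hcd : cq q * dq q = q • (dq q * cq q) := by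
  have h := RingQuot.mkAlgHom_rel ℂ (SLqRel.cd (q := q))
  simpa [cq, dq, map_mul] using h

lemma had : aq q * dq q - dq q * aq q = (q - q⁻¹) • (bq q * cq q) := by
  have h := RingQuot.mkAlgHom_rel ℂ (SLqRel.ad (q := q))
  simpa [aq, bq, cq, dq, map_mul, map_sub] using h

lemma hdet : aq q * dq q - q • (bq q * cq q) = 1 := by
  have h := RingQuot.mkAlgHom_rel ℂ (SLqRel.det (q := q))
  simpa [aq, bq, cq, dq, map_mul, map_sub] using h

lemma hAD : aq q * dq q = 1 + q • (bq q * cq q) := by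
  have h := hdet q
  linear_combination (norm := module) h

lemma hDA : dq q * aq q = 1 + q⁻¹ • (bq q * cq q) := by
  have h1 := had q
  have h2 := hAD q
  have : dq q * aq q = aq q * dq q - (q - q⁻¹) • (bq q * cq q) := by
    linear_combination (norm := module) -h1
  rw [this, h2]
  module

lemma hbcd : (bq q * cq q) * dq q = (q ^ 2) • (dq q * (bq q * cq q)) := by
  rw [mul_assoc, hcd, mul_smul_comm, ← mul_assoc, hbd, smul_mul_assoc, smul_smul, mul_assoc]
  rw [sq]

/-- `a d^(n+1) = d^(n+1) a + q⁻¹(q^(2(n+1)) - 1) • (d^n (b c))` -/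
lemma a_dpow (hq0 : q ≠ 0) (n : ℕ) :
    aq q * dq q ^ (n + 1) =
      dq q ^ (n + 1) * aq q + (q⁻¹ * (q ^ (2 * (n + 1)) - 1)) • (dq q ^ n * (bq q * cq q)) := by
  induction n with
  | zero =>
    simp only [zero_add, pow_one, pow_zero, one_mul]
    rw [hAD, hDA]
    match_scalars
    · ring
    · field_simp
      ring
  | succ n ih =>
    have h1 : aq q * dq q ^ (n + 1 + 1) = (aq q * dq q ^ (n + 1)) * dq q := by
      rw [mul_assoc, ← pow_succ]
    rw [h1, ih, add_mul, smul_mul_assoc, mul_assoc, mul_assoc (dq q ^ n), hbcd]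
    have h2 : dq q ^ (n + 1 + 1) * aq q = dq q ^ (n + 1) * (1 + q⁻¹ • (bq q * cq q)) := by
      rw [← hDA, ← mul_assoc, ← pow_succ]
    have h1' : dq q ^ (n + 1) * dq q = dq q ^ (n + 1 + 1) := (pow_succ _ _).symm
    rw [hAD, h2]
    have h3 : dq q ^ n * ((q ^ 2) • (dq q * (bq q * cq q))) =
        (q ^ 2) • (dq q ^ (n + 1) * (bq q * cq q)) := by
      rw [mul_smul_comm, ← mul_assoc, ← pow_succ]
    rw [h3]
    rw [mul_add (dq q ^ (n + 1)), mul_one, mul_smul_comm, smul_smul]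
    rw [mul_add (dq q ^ (n + 1)), mul_one, mul_smul_comm]
    rw [add_assoc, add_assoc, ← add_smul, ← add_smul]
    congr 2
    field_simp
    ring

/-- Recurrence-defined coefficients. -/
def Pc (q : ℂ) : ℕ → ℕ → ℂ
  | 0, 0 => 1
  | 0, _ + 1 => 0
  | k + 1, 0 => Pc q k 0
  | k + 1, j + 1 => Pc q k (j + 1) * q ^ (2 * (j + 1)) + Pc q k j * q ^ (2 * j + 1)

lemma Pc_zero (k : ℕ) : Pc q k 0 = 1 := by
  induction k with
  | zero => rfl
  | succ k ih => rw [Pc, ih]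

lemma Pc_eq_zero_of_lt : ∀ k j : ℕ, k < j → Pc q k j = 0 := by
  intro k
  induction k with
  | zero => intro j hj; match j, hj with | j + 1, _ => rfl
  | succ k ih =>
    intro j hj
    match j, hj with
    | j + 1, hj =>
      rw [Pc, ih (j + 1) (by omega), ih j (by omega)]
      ring

lemma Pc_diag : ∀ k : ℕ, Pc q k k = q ^ (k ^ 2) := by
  intro k
  induction k with
  | zero => rfl
  | succ k ih =>
    rw [Pc, ih, Pc_eq_zero_of_lt q k (k + 1) (by omega), ← pow_add]
    ring_nf

lemma Pc_succ_succ (k j : ℕ) :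
    Pc q (k + 1) (j + 1) = Pc q k (j + 1) * q ^ (2 * (j + 1)) + Pc q k j * q ^ (2 * j + 1) := rfl

lemma Pc_succ_zero (k : ℕ) : Pc q (k + 1) 0 = Pc q k 0 := rfl

lemma sum_step {M : Type*} [AddCommMonoid M] [Module ℂ M] (X : ℕ → M) (k : ℕ) :
    ∑ j ∈ Finset.range (k + 2), Pc q (k + 1) j • X j
    = ∑ j ∈ Finset.range (k + 1), (Pc q k j * q ^ (2 * j)) • X j
      + ∑ j ∈ Finset.range (k + 1), (Pc q k j * q ^ (2 * j + 1)) • X (j + 1) := by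
  rw [Finset.sum_range_succ' _ (k + 1)]
  simp only [Pc_succ_succ, Pc_succ_zero, add_smul]
  rw [Finset.sum_add_distrib]
  rw [Finset.sum_range_succ (fun i => (Pc q k (i + 1) * q ^ (2 * (i + 1))) • X (i + 1)) k]
  rw [Pc_eq_zero_of_lt q k (k + 1) (by omega)]
  rw [Finset.sum_range_succ' (fun j => (Pc q k j * q ^ (2 * j)) • X j) k]
  simp only [Nat.mul_zero, pow_zero, mul_one, zero_mul, zero_smul, add_zero]
  abel

lemma a_bc (j : ℕ) :
    aq q * (bq q ^ j * cq q ^ j) = (q ^ (2 * j)) • ((bq q ^ j * cq q ^ j) * aq q) := by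
  have e1 := pow_comm_smul q (aq q) (bq q) (hab q) j
  have e2 := pow_comm_smul q (aq q) (cq q) (hac q) j
  rw [← mul_assoc, e1, smul_mul_assoc, mul_assoc, e2, mul_smul_comm, smul_smul, ← pow_add,
    ← mul_assoc, two_mul]

lemma bcpow (j : ℕ) :
    (bq q ^ j * cq q ^ j) * (bq q * cq q) = bq q ^ (j + 1) * cq q ^ (j + 1) := by
  have hc : Commute (cq q) (bq q) := (hbc q).symm
  have h : cq q ^ j * bq q = bq q * cq q ^ j := (hc.pow_left j).eq
  rw [mul_assoc, ← mul_assoc (cq q ^ j), h, mul_assoc (bq q), ← mul_assoc (bq q ^ j),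
    ← pow_succ, ← pow_succ]

lemma termstep (j : ℕ) :
    aq q * ((bq q ^ j * cq q ^ j) * dq q)
      = (q ^ (2 * j)) • (bq q ^ j * cq q ^ j)
        + (q ^ (2 * j + 1)) • (bq q ^ (j + 1) * cq q ^ (j + 1)) := by
  rw [← mul_assoc, a_bc, smul_mul_assoc, mul_assoc, hAD, mul_add (bq q ^ j * cq q ^ j), mul_one,
    mul_smul_comm, bcpow, smul_add, smul_smul, ← pow_succ]

lemma key1 (k : ℕ) :
    aq q ^ k * dq q ^ k = ∑ j ∈ Finset.range (k + 1), Pc q k j • (bq q ^ j * cq q ^ j) := by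
  induction k with
  | zero => simp [Pc]
  | succ k ih =>
    have e0 : aq q ^ (k + 1) * dq q ^ (k + 1) = aq q * ((aq q ^ k * dq q ^ k) * dq q) := by
      rw [pow_succ', pow_succ, mul_assoc, ← mul_assoc (aq q ^ k)]
    rw [e0, ih, Finset.sum_mul, Finset.mul_sum]
    have e1 : ∀ j ∈ Finset.range (k + 1), aq q * (Pc q k j • (bq q ^ j * cq q ^ j) * dq q)
        = (Pc q k j * q ^ (2 * j)) • (bq q ^ j * cq q ^ j)
          + (Pc q k j * q ^ (2 * j + 1)) • (bq q ^ (j + 1) * cq q ^ (j + 1)) := by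
      intro j _
      rw [smul_mul_assoc, mul_smul_comm, termstep, smul_add, smul_smul, smul_smul]
    rw [Finset.sum_congr rfl e1, Finset.sum_add_distrib, ← sum_step]

lemma pcoef_diag (k : ℕ) : pcoef q k k = q ^ (k ^ 2) := by
  unfold pcoef
  rw [Nat.sub_self, Finset.Icc_eq_empty (by omega), Finset.Icc_eq_empty (by omega)]
  simp

lemma hDen (l : ℕ) (hne : ∀ t : ℕ, 1 ≤ t → t < l → q ^ (2 * t) - 1 ≠ 0)
    (m : ℕ) (hm : m < l) : (∏ s ∈ Finset.Icc 1 m, (q ^ (2 * s) - 1)) ≠ 0 := by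
  refine Finset.prod_ne_zero_iff.mpr ?_
  intro t ht
  rw [Finset.mem_Icc] at ht
  exact hne t ht.1 (lt_of_le_of_lt ht.2 hm)

lemma pcoef_zero (l : ℕ) (hne : ∀ t : ℕ, 1 ≤ t → t < l → q ^ (2 * t) - 1 ≠ 0)
    (k : ℕ) (hkl : k < l) : pcoef q k 0 = 1 := by
  unfold pcoef
  simp only [Nat.sub_zero, pow_zero, zero_pow, Nat.zero_add, one_mul]
  norm_num
  exact hDen q l hne k hkl

lemma pcoef_rec (l : ℕ) (hne : ∀ t : ℕ, 1 ≤ t → t < l → q ^ (2 * t) - 1 ≠ 0)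
    (k j : ℕ) (hjk : j + 1 ≤ k) (hkl : k < l) :
    pcoef q (k + 1) (j + 1)
      = pcoef q k (j + 1) * q ^ (2 * (j + 1)) + pcoef q k j * q ^ (2 * j + 1) := by
  obtain ⟨m, rfl⟩ : ∃ m, k = j + 1 + m := ⟨k - (j + 1), by omega⟩
  unfold pcoef
  have e1 : ∏ r ∈ Finset.Icc (j + 1 + 1) (j + 1 + m + 1), (q ^ (2 * r) - 1)
      = (∏ r ∈ Finset.Icc (j + 1 + 1) (j + 1 + m), (q ^ (2 * r) - 1))
          * (q ^ (2 * (j + 1 + m + 1)) - 1) :=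
    Finset.prod_Icc_succ_top (by omega) _
  have e2 : ∏ r ∈ Finset.Icc (j + 1) (j + 1 + m), (q ^ (2 * r) - 1)
      = (q ^ (2 * (j + 1)) - 1)
          * ∏ r ∈ Finset.Icc (j + 1 + 1) (j + 1 + m), (q ^ (2 * r) - 1) := by
    rw [show Finset.Icc (j + 1 + 1) (j + 1 + m) = Finset.Ioc (j + 1) (j + 1 + m) from
      Finset.Icc_add_one_left_eq_Ioc ..]
    exact (Finset.mul_prod_Ioc_eq_prod_Icc (by omega)).symm
  have d1 : Finset.Icc 1 (j + 1 + m + 1 - (j + 1)) = Finset.Icc 1 (m + 1) := by congr 1; omega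
  have d2 : Finset.Icc 1 (j + 1 + m - (j + 1)) = Finset.Icc 1 m := by congr 1; omega
  have d3 : Finset.Icc 1 (j + 1 + m - j) = Finset.Icc 1 (m + 1) := by congr 1; omega
  have e3 : ∏ s ∈ Finset.Icc 1 (m + 1), (q ^ (2 * s) - 1)
      = (∏ s ∈ Finset.Icc 1 m, (q ^ (2 * s) - 1)) * (q ^ (2 * (m + 1)) - 1) :=
    Finset.prod_Icc_succ_top (by omega) _
  rw [d1, d2, d3, e1, e2, e3]
  have hDm : (∏ s ∈ Finset.Icc 1 m, (q ^ (2 * s) - 1)) ≠ 0 :=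
    hDen q l hne m (by omega)
  have hFm : (q ^ (2 * (m + 1)) - 1) ≠ 0 := hne (m + 1) (by omega) (by omega)
  have hsq : q ^ ((j + 1) ^ 2) = q ^ (j ^ 2) * q ^ (2 * j + 1) := by
    rw [← pow_add]
    congr 1
    ring
  rw [hsq]
  field_simp
  ring

lemma key2 (l : ℕ) (hne : ∀ t : ℕ, 1 ≤ t → t < l → q ^ (2 * t) - 1 ≠ 0) :
    ∀ k, k ≤ l → ∀ j, 1 ≤ j → j ≤ k → Pc q k j = pcoef q k j := by
  intro k
  induction k with
  | zero => intro _ j h1 h2; omega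
  | succ k ih =>
    intro hkl j h1 hjk
    obtain ⟨i, rfl⟩ : ∃ i, j = i + 1 := ⟨j - 1, by omega⟩
    rcases Nat.lt_or_ge i k with hlt | hge
    · have hik : i + 1 ≤ k := by omega
      have hA : Pc q k (i + 1) = pcoef q k (i + 1) := ih (by omega) (i + 1) (by omega) hik
      have hB : Pc q k i = pcoef q k i := by
        rcases Nat.eq_zero_or_pos i with rfl | hi
        · rw [Pc_zero, pcoef_zero q l hne k (by omega)]
        · exact ih (by omega) i hi (by omega)
      rw [Pc_succ_succ, hA, hB, ← pcoef_rec q l hne k i hik (by omega)]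
    · have : i = k := by omega
      subst this
      rw [Pc_diag, pcoef_diag]

lemma bc_merge (u v w x : ℕ) :
    (bq q ^ u * cq q ^ v) * (bq q ^ w * cq q ^ x) = bq q ^ (u + w) * cq q ^ (v + x) := by
  have hc : Commute (cq q) (bq q) := (hbc q).symm
  have h : cq q ^ v * bq q ^ w = bq q ^ w * cq q ^ v := (hc.pow_pow v w).eq
  rw [mul_assoc, ← mul_assoc (cq q ^ v), h, mul_assoc (bq q ^ w), ← mul_assoc (bq q ^ u),
    ← pow_add, ← pow_add]

end SLqAux

open SLqAux in
/-- For `q` a primitive `l`-th root of unity, `l` odd, and `0 ≤ k ≤ l`: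
`b^r c^s d^(l-k) = q^((l-k)(r+s)) δ a^k b^r c^s - Σ_{j=1}^k p_{k,j}(q) b^(r+j) c^(s+j) d^(l-k)`,
where `δ = d^l` is central. -/
theorem stmt11 (q : ℂ) (l : ℕ) (hq : IsPrimitiveRoot q l) (hl : Odd l)
    (k r s : ℕ) (hk : k ≤ l) :
    bq q ^ r * cq q ^ s * dq q ^ (l - k) =
      q ^ ((l - k) * (r + s)) • (dq q ^ l * (aq q ^ k * bq q ^ r * cq q ^ s)) -
        ∑ j ∈ Finset.Icc 1 k,
          pcoef q k j • (bq q ^ (r + j) * cq q ^ (s + j) * dq q ^ (l - k)) := by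
  have hl1 : 1 ≤ l := hl.pos
  have hql : q ^ l = 1 := hq.pow_eq_one
  have hq0 : q ≠ 0 := by
    intro h
    rw [h, zero_pow (by omega : l ≠ 0)] at hql
    exact zero_ne_one hql
  have hne : ∀ t : ℕ, 1 ≤ t → t < l → q ^ (2 * t) - 1 ≠ 0 := by
    intro t ht1 htl h0
    have h1 : q ^ (2 * t) = 1 := by linear_combination h0
    have h2 : l ∣ 2 * t := (hq.pow_eq_one_iff_dvd (2 * t)).mp h1
    have hcop : Nat.Coprime l 2 := Nat.coprime_two_right.mpr hl
    have h3 : l ∣ t := hcop.dvd_of_dvd_mul_left h2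
    have := Nat.le_of_dvd (by omega) h3
    omega
  -- centrality of d^l
  have hDlA : dq q ^ l * aq q = aq q * dq q ^ l := by
    obtain ⟨n, hn⟩ : ∃ n, l = n + 1 := ⟨l - 1, by omega⟩
    have h := a_dpow q hq0 n
    have hz : q⁻¹ * (q ^ (2 * (n + 1)) - 1) = 0 := by
      have h1 : q ^ (2 * (n + 1)) = 1 := by
        rw [mul_comm, pow_mul, ← hn, hql, one_pow]
      rw [h1]
      ring
    rw [hz, zero_smul, add_zero] at h
    rw [hn, h]
  have cA : Commute (dq q ^ l) (aq q) := hDlA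
  have cB : Commute (dq q ^ l) (bq q) := by
    have h := pow_comm_smul q (bq q) (dq q) (hbd q) l
    rw [hql, one_smul] at h
    exact h.symm
  have cC : Commute (dq q ^ l) (cq q) := by
    have h := pow_comm_smul q (cq q) (dq q) (hcd q) l
    rw [hql, one_smul] at h
    exact h.symm
  have hcomm : dq q ^ l * (aq q ^ k * bq q ^ r * cq q ^ s)
      = aq q ^ k * bq q ^ r * cq q ^ s * dq q ^ l :=
    (((cA.pow_right k).mul_right (cB.pow_right r)).mul_right (cC.pow_right s)).eq
  have hsplit : dq q ^ l = dq q ^ k * dq q ^ (l - k) := by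
    rw [← pow_add]
    congr 1
    omega
  have hBC_D : (bq q ^ r * cq q ^ s) * dq q ^ k
      = q ^ (k * (r + s)) • (dq q ^ k * (bq q ^ r * cq q ^ s)) := by
    have h1 := pow_pow_comm_smul q (bq q) (dq q) (hbd q) r k
    have h2 := pow_pow_comm_smul q (cq q) (dq q) (hcd q) s k
    rw [mul_assoc, h2, mul_smul_comm, ← mul_assoc, h1, smul_mul_assoc, smul_smul, mul_assoc,
      ← pow_add]
    congr 2
    ring
  have main1 : dq q ^ l * (aq q ^ k * bq q ^ r * cq q ^ s)
      = q ^ (k * (r + s)) • ∑ j ∈ Finset.range (k + 1),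
          Pc q k j • (bq q ^ (r + j) * cq q ^ (s + j) * dq q ^ (l - k)) := by
    rw [hcomm, hsplit, ← mul_assoc, mul_assoc (aq q ^ k) (bq q ^ r) (cq q ^ s),
      mul_assoc (aq q ^ k) (bq q ^ r * cq q ^ s) (dq q ^ k), hBC_D, mul_smul_comm,
      smul_mul_assoc, ← mul_assoc (aq q ^ k) (dq q ^ k), key1, Finset.sum_mul,
      Finset.sum_mul]
    congr 1
    refine Finset.sum_congr rfl ?_
    intro j _
    rw [smul_mul_assoc, smul_mul_assoc, bc_merge, Nat.add_comm j r, Nat.add_comm j s]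
  rw [main1, smul_smul, ← pow_add]
  have hpow : q ^ ((l - k) * (r + s) + k * (r + s)) = 1 := by
    rw [← add_mul, Nat.sub_add_cancel hk, pow_mul, hql, one_pow]
  rw [hpow, one_smul, Finset.sum_range_succ', Pc_zero, one_smul]
  rw [show Finset.Icc 1 k = Finset.Ico 1 (k + 1) from (Finset.Ico_add_one_right_eq_Icc ..).symm,
    Finset.sum_Ico_eq_sum_range]
  simp only [Nat.add_sub_cancel]
  have hc2 : ∀ i ∈ Finset.range k,
      pcoef q k (1 + i) • (bq q ^ (r + (1 + i)) * cq q ^ (s + (1 + i)) * dq q ^ (l - k))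
      = Pc q k (i + 1) • (bq q ^ (r + (i + 1)) * cq q ^ (s + (i + 1)) * dq q ^ (l - k)) := by
    intro i hi
    rw [Finset.mem_range] at hi
    rw [Nat.add_comm 1 i, key2 q l hne k hk (i + 1) (by omega) (by omega)]
  rw [Finset.sum_congr rfl hc2, add_sub_cancel_left]
  norm_num
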